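/- Let M be an expanding nonnegative real square matrix with spectral radius λ(M). Then for every pair of indices i,j, limsup_{m→∞} (a_{ij}^m)^{1/m} = λ(M), where a_{ij}^m is the (i,j) entry of M^m. -/

import Mathlib

/-- A nonnegative real square matrix is *expanding* if every entry of `M^m` has
`limsup` equal to `∞` as `m → ∞`. -/
def Matrix.IsExpanding {n : ℕ} (M : Matrix (Fin n) (Fin n) ℝ) : Prop :=
  ∀ i j, Filter.limsup (fun m : ℕ => (((M ^ m) i j : ℝ) : EReal)) Filter.atTop = ⊤

/-- The spectral radius of a real square matrix: the maximum of the absolute values of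
its complex eigenvalues (roots of the characteristic polynomial over `ℂ`). -/
noncomputable def Matrix.spectralRadius {n : ℕ} (M : Matrix (Fin n) (Fin n) ℝ) : ℝ :=
  sSup {r : ℝ | ∃ μ : ℂ, ((M.map (Complex.ofReal)).charpoly).IsRoot μ ∧ r = ‖μ‖}

open Filter Polynomial Matrix Topology

attribute [local instance] Matrix.linftyOpNormedRing Matrix.linftyOpNormedAlgebra
  Matrix.linfty_opNormOneClass

section Aux

variable {n : ℕ}

lemma charpoly_eval' (A : Matrix (Fin n) (Fin n) ℂ) (μ : ℂ) :
    A.charpoly.eval μ = (Matrix.scalar (Fin n) μ - A).det := by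
  rw [Matrix.charpoly, eval_det, matPolyEquiv_charmatrix]
  simp

lemma mem_spectrum_iff_root (A : Matrix (Fin n) (Fin n) ℂ) (μ : ℂ) :
    μ ∈ spectrum ℂ A ↔ A.charpoly.IsRoot μ := by
  rw [spectrum.mem_iff, IsRoot, charpoly_eval']
  rw [Matrix.isUnit_iff_isUnit_det, isUnit_iff_ne_zero, not_ne_iff, Matrix.algebraMap_eq_diagonal,
    Matrix.scalar_apply]
  rfl

/-- entries of a nonnegative matrix are bounded by the L∞-operator norm of its
complexification -/
lemma entry_le_norm (B : Matrix (Fin n) (Fin n) ℝ) (hB : ∀ i j, 0 ≤ B i j) (i j : Fin n) :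
    B i j ≤ ‖B.map Complex.ofReal‖ := by
  have h1 : ‖(B.map Complex.ofReal) i j‖₊ ≤ ‖B.map Complex.ofReal‖₊ := by
    rw [Matrix.linfty_opNNNorm_def]
    refine le_trans ?_
      (Finset.le_sup (f := fun k => ∑ l : Fin n, ‖(B.map Complex.ofReal) k l‖₊)
        (Finset.mem_univ i))
    exact Finset.single_le_sum (f := fun l => ‖(B.map Complex.ofReal) i l‖₊)
      (fun c _ => zero_le) (Finset.mem_univ j)
  have h2 : ‖(B.map Complex.ofReal) i j‖ ≤ ‖B.map Complex.ofReal‖ := h1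
  calc B i j = |B i j| := (abs_of_nonneg (hB i j)).symm
    _ = ‖(B.map Complex.ofReal) i j‖ := by simp [Matrix.map_apply]
    _ ≤ ‖B.map Complex.ofReal‖ := h2

/-- the L∞-operator norm of the complexification of a nonnegative matrix is bounded by the
sum of all entries -/
lemma norm_le_total_sum (B : Matrix (Fin n) (Fin n) ℝ) (hB : ∀ i j, 0 ≤ B i j) :
    ‖B.map Complex.ofReal‖ ≤ ∑ k : Fin n, ∑ l : Fin n, B k l := by
  have h1 : ‖B.map Complex.ofReal‖₊ ≤
      ∑ k : Fin n, ∑ l : Fin n, ‖(B.map Complex.ofReal) k l‖₊ := by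
    rw [Matrix.linfty_opNNNorm_def]
    refine Finset.sup_le fun k _ => ?_
    exact Finset.single_le_sum (f := fun a => ∑ l : Fin n, ‖(B.map Complex.ofReal) a l‖₊)
      (fun c _ => Finset.sum_nonneg fun _ _ => zero_le) (Finset.mem_univ k)
  have h2 : ‖B.map Complex.ofReal‖ ≤
      ((∑ k : Fin n, ∑ l : Fin n, ‖(B.map Complex.ofReal) k l‖₊ : NNReal) : ℝ) :=
    NNReal.coe_le_coe.2 h1
  refine h2.trans (le_of_eq ?_)
  push_cast
  refine Finset.sum_congr rfl fun k _ => Finset.sum_congr rfl fun l _ => ?_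
  simp [Matrix.map_apply, abs_of_nonneg (hB k l)]

end Aux

/-- For an expanding nonnegative real matrix `M` with spectral radius `λ(M)`, for all
indices `i, j` one has `limsup_{m→∞} (a_{ij}^m)^{1/m} = λ(M)`, where `a_{ij}^m` is the
`(i,j)` entry of `M^m`. -/
theorem expanding_matrix_entry_growth (n : ℕ) (hn : 0 < n)
    (M : Matrix (Fin n) (Fin n) ℝ) (hpos : ∀ i j, 0 ≤ M i j)
    (hexp : M.IsExpanding) :
    ∀ i j, Filter.limsup (fun m : ℕ => ((M ^ m) i j) ^ ((m : ℝ)⁻¹)) Filter.atTop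
      = M.spectralRadius := by
  intro i j
  haveI : Nonempty (Fin n) := ⟨⟨0, hn⟩⟩
  haveI compl : CompleteSpace (Matrix (Fin n) (Fin n) ℂ) :=
    inferInstance
  set A : Matrix (Fin n) (Fin n) ℂ := M.map Complex.ofReal with hA
  -- powers commute with complexification
  have hAm : ∀ m : ℕ, A ^ m = (M ^ m).map Complex.ofReal := by
    intro m
    have h := (map_pow (Complex.ofRealHom.mapMatrix (m := Fin n)) M m).symm
    exact h
  -- entries of powers are nonnegative
  have hMm : ∀ (m : ℕ) (k l : Fin n), 0 ≤ (M ^ m) k l := by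
    intro m
    induction m with
    | zero => intro k l; by_cases h : k = l <;> simp [Matrix.one_apply, h]
    | succ m ih =>
      intro k l
      rw [pow_succ, Matrix.mul_apply]
      exact Finset.sum_nonneg fun c _ => mul_nonneg (ih k c) (hpos c l)
  -- entry-wise submultiplicativity
  have hsub : ∀ (a b : ℕ) (k l c : Fin n),
      (M ^ a) k c * (M ^ b) c l ≤ (M ^ (a + b)) k l := by
    intro a b k l c
    rw [pow_add, Matrix.mul_apply]
    exact Finset.single_le_sum
      (fun d _ => mul_nonneg (hMm a k d) (hMm b d l)) (Finset.mem_univ c)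
  -- spectrum and maximal root
  have hcp : A.charpoly.Monic := Matrix.charpoly_monic A
  have hne : A.charpoly ≠ 0 := hcp.ne_zero
  have hdeg : 0 < A.charpoly.degree := by
    rw [Polynomial.degree_eq_natDegree hne, Matrix.charpoly_natDegree_eq_dim]
    simpa using hn
  obtain ⟨μ₁, hμ₁⟩ := Complex.exists_root hdeg
  obtain ⟨μ₀, hμ₀R, hmax⟩ := Set.exists_max_image {μ : ℂ | A.charpoly.IsRoot μ} (‖·‖)
    (Polynomial.finite_setOf_isRoot hne) ⟨μ₁, hμ₁⟩
  set lam : ℝ := ‖μ₀‖ with hlam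
  have hlam0 : 0 ≤ lam := norm_nonneg μ₀
  -- the spectral radius is lam
  have hsR : M.spectralRadius = lam := by
    rw [Matrix.spectralRadius]
    exact IsGreatest.csSup_eq ⟨⟨μ₀, hμ₀R, rfl⟩, by rintro r ⟨μ, hμ, rfl⟩; exact hmax μ hμ⟩
  have hspec : spectrum ℂ A = {μ : ℂ | A.charpoly.IsRoot μ} :=
    Set.ext fun μ => mem_spectrum_iff_root A μ
  have hρ : _root_.spectralRadius ℂ A = (‖μ₀‖₊ : ENNReal) := by
    apply le_antisymm
    · rw [_root_.spectralRadius]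
      refine iSup₂_le fun μ hμ => ?_
      rw [hspec] at hμ
      have h : ‖μ‖₊ ≤ ‖μ₀‖₊ := by
        have h' := hmax μ hμ
        simpa [hlam, ← coe_nnnorm, NNReal.coe_le_coe] using h'
      exact_mod_cast h
    · rw [_root_.spectralRadius]
      exact le_iSup₂ (f := fun (μ : ℂ) (_ : μ ∈ spectrum ℂ A) => (‖μ‖₊ : ENNReal)) μ₀
        (by rw [hspec]; exact hμ₀R)
  -- Gelfand's formula in the reals
  have hgel := spectrum.pow_nnnorm_pow_one_div_tendsto_nhds_spectralRadius A
  rw [hρ] at hgel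
  have htends : Tendsto (fun m : ℕ => ‖A ^ m‖ ^ ((m : ℝ)⁻¹)) atTop (𝓝 lam) := by
    have h1 : Tendsto (fun m : ℕ => ((‖A ^ m‖₊ : ENNReal) ^ (1 / (m : ℝ))).toReal) atTop
        (𝓝 ((‖μ₀‖₊ : ENNReal)).toReal) :=
      (ENNReal.tendsto_toReal (by simp)).comp hgel
    have h2 : ((‖μ₀‖₊ : ENNReal)).toReal = lam := by
      simp [hlam]
    rw [h2] at h1
    refine h1.congr fun m => ?_
    rw [← ENNReal.toReal_rpow, one_div]
    simp
  -- lam ^ m is at most the norm of A ^ m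
  have hlow : ∀ m : ℕ, lam ^ m ≤ ‖A ^ m‖ := by
    intro m
    have hμ₀spec : μ₀ ∈ spectrum ℂ A := by rw [hspec]; exact hμ₀R
    have hmem : μ₀ ^ m ∈ spectrum ℂ ((aeval A) ((X : ℂ[X]) ^ m)) :=
      spectrum.subset_polynomial_aeval A ((X : ℂ[X]) ^ m) ⟨μ₀, hμ₀spec, by simp⟩
    rw [map_pow, aeval_X] at hmem
    have h := spectrum.norm_le_norm_of_mem hmem
    calc lam ^ m = ‖μ₀ ^ m‖ := by rw [norm_pow]
      _ ≤ ‖A ^ m‖ := h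
  -- the sequences
  set f : ℕ → ℝ := fun m => ((M ^ m) i j) ^ ((m : ℝ)⁻¹) with hf
  set g : ℕ → ℝ := fun m => ‖A ^ m‖ ^ ((m : ℝ)⁻¹) with hg
  have hgt : Tendsto g atTop (𝓝 lam) := htends
  have hfg : ∀ m, f m ≤ g m := fun m =>
    Real.rpow_le_rpow (hMm m i j) (by rw [hAm m]; exact entry_le_norm _ (hMm m) i j)
      (by positivity)
  have hf0 : ∀ m, 0 ≤ f m := fun m => Real.rpow_nonneg (hMm m i j) _
  have hgbd : IsBoundedUnder (· ≤ ·) atTop g := hgt.isBoundedUnder_le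
  have hfbd : IsBoundedUnder (· ≤ ·) atTop f :=
    hgbd.mono_le (Eventually.of_forall hfg)
  have hfcob : IsCoboundedUnder (· ≤ ·) atTop f :=
    IsBoundedUnder.isCoboundedUnder_le ⟨0, Filter.eventually_map.2 (Eventually.of_forall hf0)⟩
  -- upper bound
  have hupper : limsup f atTop ≤ lam := by
    have h := limsup_le_limsup (Eventually.of_forall hfg) hfcob hgbd
    rwa [hgt.limsup_eq] at h
  -- positivity times from expansion
  have hexp' : ∀ k l : Fin n, ∃ p : ℕ, 1 ≤ (M ^ p) k l := by
    intro k l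
    have h1 : ((1 : ℝ) : EReal) < limsup (fun m : ℕ => (((M ^ m) k l : ℝ) : EReal)) atTop := by
      rw [hexp k l]
      exact lt_of_le_of_lt le_rfl (EReal.coe_lt_top 1)
    have h2 := Filter.frequently_lt_of_lt_limsup (by isBoundedDefault) h1
    obtain ⟨m, hm⟩ := h2.exists
    exact ⟨m, by exact_mod_cast hm.le⟩
  -- lam is at least 1
  have hlam1 : (1 : ℝ) ≤ lam := by
    have hfreq : ∃ᶠ m in atTop, (1 : ℝ) ≤ g m := by
      have h1 : ((1 : ℝ) : EReal) < limsup (fun m : ℕ => (((M ^ m) i j : ℝ) : EReal)) atTop := by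
        rw [hexp i j]
        exact lt_of_le_of_lt le_rfl (EReal.coe_lt_top 1)
      have h2 := Filter.frequently_lt_of_lt_limsup (by isBoundedDefault) h1
      refine h2.mono fun m hm => ?_
      have hm' : (1 : ℝ) ≤ (M ^ m) i j := by exact_mod_cast hm.le
      have hm'' : (1 : ℝ) ≤ ‖A ^ m‖ := hm'.trans
        (by rw [hAm m]; exact entry_le_norm _ (hMm m) i j)
      calc (1 : ℝ) = 1 ^ ((m : ℝ)⁻¹) := (Real.one_rpow _).symm
        _ ≤ ‖A ^ m‖ ^ ((m : ℝ)⁻¹) := Real.rpow_le_rpow zero_le_one hm'' (by positivity)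
    have h := le_limsup_of_frequently_le hfreq hgbd
    rwa [hgt.limsup_eq] at h
  -- choose positivity exponents
  choose p hp using fun k => hexp' i k
  choose q hq using fun l => hexp' l j
  set C : ℕ := (Finset.univ.sup p) + (Finset.univ.sup q) with hC
  -- key inequality
  have hkey : ∀ m : ℕ, ∃ m' : ℕ, m ≤ m' ∧ m' ≤ m + C ∧
      lam ^ m ≤ ((n : ℝ) ^ 2) * (M ^ m') i j := by
    intro m
    obtain ⟨kl, _, hklmax⟩ := Finset.exists_max_image (Finset.univ : Finset (Fin n × Fin n))
      (fun r => (M ^ m) r.1 r.2) Finset.univ_nonempty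
    obtain ⟨k, l⟩ := kl
    refine ⟨p k + m + q l, by omega, ?_, ?_⟩
    · have h1 : p k ≤ Finset.univ.sup p := Finset.le_sup (Finset.mem_univ k)
      have h2 : q l ≤ Finset.univ.sup q := Finset.le_sup (Finset.mem_univ l)
      omega
    · have hbound : lam ^ m ≤ ((n : ℝ) ^ 2) * (M ^ m) k l := by
        have h1 : ‖A ^ m‖ ≤ ∑ a : Fin n, ∑ b : Fin n, (M ^ m) a b := by
          rw [hAm m]; exact norm_le_total_sum _ (hMm m)
        have h2 : ∑ a : Fin n, ∑ b : Fin n, (M ^ m) a b ≤ ((n : ℝ) ^ 2) * (M ^ m) k l := by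
          calc ∑ a : Fin n, ∑ b : Fin n, (M ^ m) a b
              ≤ ∑ _a : Fin n, ∑ _b : Fin n, (M ^ m) k l :=
              Finset.sum_le_sum fun a _ => Finset.sum_le_sum fun b _ =>
                hklmax (a, b) (Finset.mem_univ _)
            _ = ((n : ℝ) ^ 2) * (M ^ m) k l := by
              simp [Finset.sum_const]; ring
        exact ((hlow m).trans h1).trans h2
      refine hbound.trans (mul_le_mul_of_nonneg_left ?_ (by positivity))
      calc (M ^ m) k l ≤ (M ^ (p k)) i k * (M ^ m) k l :=
            le_mul_of_one_le_left (hMm m k l) (hp k)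
        _ ≤ (M ^ (p k + m)) i l := hsub (p k) m i l k
        _ ≤ (M ^ (p k + m)) i l * (M ^ (q l)) l j :=
            le_mul_of_one_le_right (hMm _ i l) (hq l)
        _ ≤ (M ^ (p k + m + q l)) i j := hsub (p k + m) (q l) i j l
  -- the constant K
  set K : ℝ := ((n : ℝ) ^ 2) * lam ^ C with hK
  have hlamC : (1 : ℝ) ≤ lam ^ C := by
    simpa using pow_le_pow_left₀ zero_le_one hlam1 C
  have hn1 : (1 : ℝ) ≤ (n : ℝ) ^ 2 := by
    have h : (1 : ℝ) ≤ (n : ℝ) := by exact_mod_cast hn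
    nlinarith
  have hK1 : (1 : ℝ) ≤ K := by nlinarith
  have hKpos : (0 : ℝ) < K := lt_of_lt_of_le one_pos hK1
  have hKtends : Tendsto (fun m : ℕ => lam / K ^ ((m : ℝ)⁻¹)) atTop (𝓝 lam) := by
    have h1 : Tendsto (fun m : ℕ => ((m : ℝ)⁻¹)) atTop (𝓝 0) :=
      tendsto_inv_atTop_nhds_zero_nat
    have h2 : ContinuousAt (fun z : ℝ => K ^ z) 0 :=
      Real.continuousAt_const_rpow (ne_of_gt hKpos)
    have h3 : Tendsto (fun m : ℕ => K ^ ((m : ℝ)⁻¹)) atTop (𝓝 1) := by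
      have h4 := h2.tendsto.comp h1
      simpa [Real.rpow_zero, Function.comp_def] using h4
    have h5 := Tendsto.div (tendsto_const_nhds (x := lam) (f := atTop)) h3 one_ne_zero
    simpa [Pi.div_def] using h5
  -- lower bound
  have hlower : lam ≤ limsup f atTop := by
    refine le_of_forall_lt_imp_le_of_dense fun b hb => ?_
    refine le_limsup_of_frequently_le ?_ hfbd
    rw [frequently_atTop]
    intro N
    have hev : ∀ᶠ m : ℕ in atTop, b < lam / K ^ ((m : ℝ)⁻¹) :=
      hKtends.eventually (eventually_gt_nhds hb)
    obtain ⟨m, hmb, hmN1⟩ := (hev.and (eventually_ge_atTop (max N 1))).exists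
    have hmN : N ≤ m := le_trans (le_max_left _ _) hmN1
    have hm1 : 1 ≤ m := le_trans (le_max_right _ _) hmN1
    obtain ⟨m', hmm', hm'C, hle⟩ := hkey m
    refine ⟨m', le_trans hmN hmm', ?_⟩
    have hm'1 : 1 ≤ m' := le_trans hm1 hmm'
    have hm'pos : (0 : ℝ) < (m' : ℝ) := by exact_mod_cast hm'1
    have hmpos : (0 : ℝ) < (m : ℝ) := by exact_mod_cast hm1
    -- entry lower bound
    have hstep : lam ^ m' / K ≤ (M ^ m') i j := by
      have h1 : lam ^ m' ≤ lam ^ m * lam ^ C := by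
        rw [← pow_add]; exact pow_le_pow_right₀ hlam1 (by omega)
      have h2 : lam ^ m' ≤ K * (M ^ m') i j := by
        calc lam ^ m' ≤ lam ^ m * lam ^ C := h1
          _ ≤ (((n : ℝ) ^ 2) * (M ^ m') i j) * lam ^ C :=
              mul_le_mul_of_nonneg_right hle (by positivity)
          _ = K * (M ^ m') i j := by rw [hK]; ring
      rw [div_le_iff₀ hKpos]
      linarith
    have hfm' : lam / K ^ ((m' : ℝ)⁻¹) ≤ f m' := by
      have h1 : (lam ^ m' / K) ^ ((m' : ℝ)⁻¹) ≤ f m' :=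
        Real.rpow_le_rpow (by positivity) hstep (by positivity)
      calc lam / K ^ ((m' : ℝ)⁻¹)
          = (lam ^ m') ^ ((m' : ℝ)⁻¹) / K ^ ((m' : ℝ)⁻¹) := by
            rw [← Real.rpow_natCast lam m', ← Real.rpow_mul hlam0,
              mul_inv_cancel₀ (ne_of_gt hm'pos), Real.rpow_one]
        _ = (lam ^ m' / K) ^ ((m' : ℝ)⁻¹) :=
            (Real.div_rpow (by positivity) hKpos.le _).symm
        _ ≤ f m' := h1
    have hmono : lam / K ^ ((m : ℝ)⁻¹) ≤ lam / K ^ ((m' : ℝ)⁻¹) := by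
      have hexps : ((m' : ℝ)⁻¹) ≤ ((m : ℝ)⁻¹) := by
        apply inv_anti₀ hmpos
        exact_mod_cast hmm'
      have h1 : K ^ ((m' : ℝ)⁻¹) ≤ K ^ ((m : ℝ)⁻¹) :=
        Real.rpow_le_rpow_of_exponent_le hK1 hexps
      have h2 : (0 : ℝ) < K ^ ((m' : ℝ)⁻¹) := Real.rpow_pos_of_pos hKpos _
      exact div_le_div_of_nonneg_left hlam0 h2 h1
    exact le_trans (le_trans hmb.le hmono) hfm'
  rw [hsR]
  exact le_antisymm hupper hlower
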